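/- arXiv:1912.04436 — 2 statements merged into one kernel-verified Lean document; each statement's English description precedes it below -/
import Mathlib

section
/- Let (Q_n)_{n≥0} be a sequence of nonnegative reals with Q_0 = 1 satisfying Q_n = ∑_{k≥3} w_k ∑_{n_1+⋯+n_{2k-2} = n-1, n_i ≥ 0} Q_{n_1}⋯Q_{n_{2k-2}} for n ≥ 1, where w_k ≥ 0. If ρ = inf_{x>0} φ(x)/x where φ(x) = ∑_{k≥3} w_k (1+x)^{2k-2} (assumed finite on some interval), and ρ is attained at some x₀ > 0 where the series converges, then Q_n ≤ ρ^n for all n ≥ 0. -/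
open scoped ENNReal

/-- Sum over all compositions of sizes `≤ N` is bounded by the `m`-th power of partial sums. -/
lemma aux_comb_stmt5 (m N : ℕ) (a : ℕ → ℝ≥0∞) :
    ∑ s ∈ Finset.range (N + 1), ∑ t ∈ Finset.Nat.antidiagonalTuple m s, ∏ i, a (t i)
      ≤ (∑ i ∈ Finset.range (N + 1), a i) ^ m := by
  classical
  have h1 : (∑ i ∈ Finset.range (N + 1), a i) ^ m
      = ∑ f ∈ Fintype.piFinset (fun _ : Fin m => Finset.range (N + 1)), ∏ i, a (f i) := by
    rw [← Finset.prod_univ_sum]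
    simp [Finset.prod_const]
  have hdisj : (↑(Finset.range (N + 1)) : Set ℕ).PairwiseDisjoint
      (fun s => Finset.Nat.antidiagonalTuple m s) := by
    intro s1 _ s2 _ hne
    refine Finset.disjoint_left.2 fun t ht1 ht2 => hne ?_
    rw [Finset.Nat.mem_antidiagonalTuple] at ht1 ht2
    omega
  rw [h1, ← Finset.sum_biUnion hdisj]
  apply Finset.sum_le_sum_of_subset
  intro t ht
  rw [Finset.mem_biUnion] at ht
  obtain ⟨s, hs, ht⟩ := ht
  rw [Finset.Nat.mem_antidiagonalTuple] at ht
  rw [Finset.mem_range] at hs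
  rw [Fintype.mem_piFinset]
  intro i
  rw [Finset.mem_range]
  have : t i ≤ ∑ j, t j := Finset.single_le_sum (fun _ _ => Nat.zero_le _) (Finset.mem_univ i)
  omega

/-- If `Q` satisfies the tree recurrence with nonnegative weights `w_k` (`k ≥ 3`), and
`ρ = φ(x₀)/x₀` where `x₀ > 0` realizes the infimum of `φ(x)/x` and the series defining
`φ(x₀)` converges, then `Q n ≤ ρ^n` for all `n`. -/
theorem stmt_5 (w : ℕ → ℝ) (hw : ∀ k, 3 ≤ k → 0 ≤ w k)
    (Q : ℕ → ℝ) (hQnonneg : ∀ n, 0 ≤ Q n) (hQ0 : Q 0 = 1)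
    (hrec : ∀ n : ℕ, 1 ≤ n →
      Q n = ∑' k : ℕ, w (k + 3) *
        ∑ t ∈ Finset.Nat.antidiagonalTuple (2 * (k + 3) - 2) (n - 1), ∏ i, Q (t i))
    (x₀ : ℝ) (hx₀ : 0 < x₀) (S : ℝ)
    (hS : HasSum (fun k : ℕ => w (k + 3) * (1 + x₀) ^ (2 * (k + 3) - 2)) S)
    (ρ : ℝ) (hρ : ρ = S / x₀)
    (hinf : ∀ x : ℝ, 0 < x → ∀ Sx : ℝ,
      HasSum (fun k : ℕ => w (k + 3) * (1 + x) ^ (2 * (k + 3) - 2)) Sx → ρ ≤ Sx / x) :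
    ∀ n : ℕ, Q n ≤ ρ ^ n := by
  classical
  by_cases hB : ∃ j, 0 < w (j + 3)
  case neg =>
    -- all weights vanish
    push_neg at hB
    have hwz : ∀ k : ℕ, w (k + 3) = 0 := fun k => le_antisymm (hB k) (hw _ (by omega))
    have hS0 : S = 0 := by
      have h0 : HasSum (fun _ : ℕ => (0 : ℝ)) S := by
        have : (fun k : ℕ => w (k + 3) * (1 + x₀) ^ (2 * (k + 3) - 2))
            = fun _ : ℕ => (0 : ℝ) := by
          funext k; rw [hwz]; ring
        rwa [this] at hS
      simpa using h0.unique hasSum_zero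
    intro n
    match n with
    | 0 => simp [hQ0]
    | (n + 1) =>
      have hQ : Q (n + 1) = 0 := by
        rw [hrec (n + 1) (by omega)]
        have : (fun k : ℕ => w (k + 3) *
            ∑ t ∈ Finset.Nat.antidiagonalTuple (2 * (k + 3) - 2) (n + 1 - 1), ∏ i, Q (t i))
            = fun _ : ℕ => (0 : ℝ) := by
          funext k; rw [hwz]; ring
        rw [this, tsum_zero]
      rw [hQ, hρ, hS0]
      simp
  case pos =>
  obtain ⟨j₀, hj₀⟩ := hB
  have hfnn : ∀ k : ℕ, 0 ≤ w (k + 3) * (1 + x₀) ^ (2 * (k + 3) - 2) := fun k =>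
    mul_nonneg (hw _ (by omega)) (by positivity)
  have hSpos : 0 < S := by
    have h1 : w (j₀ + 3) * (1 + x₀) ^ (2 * (j₀ + 3) - 2) ≤ S :=
      le_hasSum hS j₀ fun i _ => hfnn i
    have h2 : 0 < w (j₀ + 3) * (1 + x₀) ^ (2 * (j₀ + 3) - 2) :=
      mul_pos hj₀ (by positivity)
    linarith
  have hρpos : 0 < ρ := hρ ▸ div_pos hSpos hx₀
  -- Step : x₀ ≤ 1
  have hx1 : x₀ ≤ 1 := by
    by_contra hx1
    push_neg at hx1
    have hkey : ∀ k : ℕ, (2 : ℝ) ^ (2 * (k + 3) - 2) * x₀ < (1 + x₀) ^ (2 * (k + 3) - 2) := by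
      intro k
      have hm : 2 * (k + 3) - 2 = 2 * k + 4 := by omega
      rw [hm, pow_add, pow_add]
      have h1 : (2 : ℝ) ^ (2 * k) ≤ (1 + x₀) ^ (2 * k) :=
        pow_le_pow_left₀ (by norm_num) (by linarith) _
      have h2 : (2 : ℝ) ^ 4 * x₀ < (1 + x₀) ^ 4 := by nlinarith [sq_nonneg (x₀ - 1), sq_nonneg (x₀ + 1), sq_nonneg x₀]
      calc (2 : ℝ) ^ (2 * k) * 2 ^ 4 * x₀ = 2 ^ (2 * k) * (2 ^ 4 * x₀) := by ring
        _ ≤ (1 + x₀) ^ (2 * k) * (2 ^ 4 * x₀) :=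
            mul_le_mul_of_nonneg_right h1 (by nlinarith)
        _ < (1 + x₀) ^ (2 * k) * (1 + x₀) ^ 4 :=
            mul_lt_mul_of_pos_left h2 (pow_pos (by linarith) _)
    set g : ℕ → ℝ := fun k => w (k + 3) * 2 ^ (2 * (k + 3) - 2) with hg
    set h : ℕ → ℝ := fun k => w (k + 3) * (1 + x₀) ^ (2 * (k + 3) - 2) / x₀ with hh
    have hgle : ∀ k, g k ≤ h k := by
      intro k
      have h2 : (2 : ℝ) ^ (2 * (k + 3) - 2) ≤ (1 + x₀) ^ (2 * (k + 3) - 2) / x₀ := by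
        rw [le_div_iff₀ hx₀]
        exact (hkey k).le
      calc g k = w (k + 3) * 2 ^ (2 * (k + 3) - 2) := rfl
        _ ≤ w (k + 3) * ((1 + x₀) ^ (2 * (k + 3) - 2) / x₀) :=
            mul_le_mul_of_nonneg_left h2 (hw _ (by omega))
        _ = h k := by rw [hh]; ring
    have hglt : g j₀ < h j₀ := by
      have h2 : (2 : ℝ) ^ (2 * (j₀ + 3) - 2) < (1 + x₀) ^ (2 * (j₀ + 3) - 2) / x₀ := by
        rw [lt_div_iff₀ hx₀]
        exact hkey j₀
      calc g j₀ = w (j₀ + 3) * 2 ^ (2 * (j₀ + 3) - 2) := rfl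
        _ < w (j₀ + 3) * ((1 + x₀) ^ (2 * (j₀ + 3) - 2) / x₀) :=
            mul_lt_mul_of_pos_left h2 hj₀
        _ = h j₀ := by rw [hh]; ring
    have hhsum : Summable h := hS.summable.div_const x₀
    have hgnn : ∀ k, 0 ≤ g k := fun k => mul_nonneg (hw _ (by omega)) (by positivity)
    have hgsum : Summable g := Summable.of_nonneg_of_le hgnn hgle hhsum
    have hlt : ∑' k, g k < ∑' k, h k := Summable.tsum_lt_tsum_of_nonneg hgnn hgle hglt hhsum
    have hhtsum : ∑' k, h k = S / x₀ := by
      rw [hh]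
      rw [tsum_div_const, hS.tsum_eq]
    have hgHasSum : HasSum (fun k : ℕ => w (k + 3) * (1 + 1 : ℝ) ^ (2 * (k + 3) - 2)) (∑' k, g k) := by
      have : (fun k : ℕ => w (k + 3) * (1 + 1 : ℝ) ^ (2 * (k + 3) - 2)) = g := by
        funext k; norm_num [hg]
      rw [this]
      exact hgsum.hasSum
    have := hinf 1 one_pos (∑' k, g k) hgHasSum
    rw [div_one] at this
    rw [hhtsum, ← hρ] at hlt
    linarith
  -- Main part
  set y : ℝ := x₀ / S with hy
  have hypos : 0 < y := div_pos hx₀ hSpos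
  set ye : ℝ≥0∞ := ENNReal.ofReal y with hye
  set xe : ℝ≥0∞ := ENNReal.ofReal x₀ with hxe
  set Qe : ℕ → ℝ≥0∞ := fun n => ENNReal.ofReal (Q n) with hQe
  -- the recurrence as an inequality in ℝ≥0∞
  have hrecE : ∀ n : ℕ, 1 ≤ n → Qe n ≤ ∑' k : ℕ, ENNReal.ofReal (w (k + 3)) *
      ∑ t ∈ Finset.Nat.antidiagonalTuple (2 * (k + 3) - 2) (n - 1), ∏ i, Qe (t i) := by
    intro n hn
    have hterm : ∀ k : ℕ, ENNReal.ofReal (w (k + 3) *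
        ∑ t ∈ Finset.Nat.antidiagonalTuple (2 * (k + 3) - 2) (n - 1), ∏ i, Q (t i))
        = ENNReal.ofReal (w (k + 3)) *
          ∑ t ∈ Finset.Nat.antidiagonalTuple (2 * (k + 3) - 2) (n - 1), ∏ i, Qe (t i) := by
      intro k
      rw [ENNReal.ofReal_mul (hw _ (by omega)),
        ENNReal.ofReal_sum_of_nonneg (fun t _ => Finset.prod_nonneg fun i _ => hQnonneg _)]
      congr 1
      refine Finset.sum_congr rfl fun t _ => ?_
      exact ENNReal.ofReal_prod_of_nonneg fun i _ => hQnonneg _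
    by_cases hsum : Summable (fun k : ℕ => w (k + 3) *
        ∑ t ∈ Finset.Nat.antidiagonalTuple (2 * (k + 3) - 2) (n - 1), ∏ i, Q (t i))
    · have : Qe n = ENNReal.ofReal (Q n) := rfl
      rw [this, hrec n hn, ENNReal.ofReal_tsum_of_nonneg
        (fun k => mul_nonneg (hw _ (by omega))
          (Finset.sum_nonneg fun t _ => Finset.prod_nonneg fun i _ => hQnonneg _)) hsum]
      exact le_of_eq (tsum_congr hterm)
    · have : Qe n = ENNReal.ofReal (Q n) := rfl
      rw [this, hrec n hn, tsum_eq_zero_of_not_summable hsum]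
      simp
  -- S in ℝ≥0∞
  have h1xe : ENNReal.ofReal (1 + x₀) = 1 + xe := by
    rw [ENNReal.ofReal_add (by norm_num) hx₀.le, ENNReal.ofReal_one]
  have hSE : ∑' k : ℕ, ENNReal.ofReal (w (k + 3)) * (1 + xe) ^ (2 * (k + 3) - 2)
      = ENNReal.ofReal S := by
    rw [← hS.tsum_eq, ENNReal.ofReal_tsum_of_nonneg hfnn hS.summable]
    refine tsum_congr fun k => ?_
    rw [ENNReal.ofReal_mul (hw _ (by omega)), ENNReal.ofReal_pow (by linarith), h1xe]
  have hyeS : ye * ENNReal.ofReal S = xe := by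
    rw [hye, hxe, ← ENNReal.ofReal_mul hypos.le, hy, div_mul_cancel₀ _ (ne_of_gt hSpos)]
  -- main induction : partial sums are bounded by xe
  have hT : ∀ N : ℕ, ∑ j ∈ Finset.range N, Qe (j + 1) * ye ^ (j + 1) ≤ xe := by
    intro N
    induction N with
    | zero => simp
    | succ N ih =>
      have step1 : ∑ j ∈ Finset.range (N + 1), Qe (j + 1) * ye ^ (j + 1)
          ≤ ∑ j ∈ Finset.range (N + 1), (∑' k : ℕ, ENNReal.ofReal (w (k + 3)) *
              ∑ t ∈ Finset.Nat.antidiagonalTuple (2 * (k + 3) - 2) j, ∏ i, Qe (t i)) * ye ^ (j + 1) := by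
        refine Finset.sum_le_sum fun j _ => ?_
        have := hrecE (j + 1) (by omega)
        simpa using mul_le_mul_left this (ye ^ (j + 1))
      have step2 : ∑ j ∈ Finset.range (N + 1), (∑' k : ℕ, ENNReal.ofReal (w (k + 3)) *
              ∑ t ∈ Finset.Nat.antidiagonalTuple (2 * (k + 3) - 2) j, ∏ i, Qe (t i)) * ye ^ (j + 1)
          = ∑' k : ℕ, ∑ j ∈ Finset.range (N + 1), (ENNReal.ofReal (w (k + 3)) *
              ∑ t ∈ Finset.Nat.antidiagonalTuple (2 * (k + 3) - 2) j, ∏ i, Qe (t i)) * ye ^ (j + 1) := by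
        rw [Finset.sum_congr rfl fun j _ => (ENNReal.tsum_mul_right).symm]
        exact (Summable.tsum_finsetSum fun j _ => ENNReal.summable).symm
      have step3 : ∀ k : ℕ, ∑ j ∈ Finset.range (N + 1), (ENNReal.ofReal (w (k + 3)) *
              ∑ t ∈ Finset.Nat.antidiagonalTuple (2 * (k + 3) - 2) j, ∏ i, Qe (t i)) * ye ^ (j + 1)
          ≤ ENNReal.ofReal (w (k + 3)) * (1 + xe) ^ (2 * (k + 3) - 2) * ye := by
        intro k
        have hcomb : ∑ j ∈ Finset.range (N + 1), (∑ t ∈ Finset.Nat.antidiagonalTuple (2 * (k + 3) - 2) j,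
              ∏ i, Qe (t i)) * ye ^ j ≤ (1 + xe) ^ (2 * (k + 3) - 2) := by
          have e1 : ∀ j ∈ Finset.range (N + 1),
              (∑ t ∈ Finset.Nat.antidiagonalTuple (2 * (k + 3) - 2) j, ∏ i, Qe (t i)) * ye ^ j
              = ∑ t ∈ Finset.Nat.antidiagonalTuple (2 * (k + 3) - 2) j, ∏ i, (Qe (t i) * ye ^ (t i)) := by
            intro j _
            rw [Finset.sum_mul]
            refine Finset.sum_congr rfl fun t ht => ?_
            rw [Finset.Nat.mem_antidiagonalTuple] at ht
            rw [Finset.prod_mul_distrib, Finset.prod_pow_eq_pow_sum, ht]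
          rw [Finset.sum_congr rfl e1]
          have := aux_comb_stmt5 (2 * (k + 3) - 2) N (fun i => Qe i * ye ^ i)
          refine this.trans ?_
          have hsplit : ∑ i ∈ Finset.range (N + 1), Qe i * ye ^ i
              = (∑ i ∈ Finset.range N, Qe (i + 1) * ye ^ (i + 1)) + Qe 0 * ye ^ 0 :=
            Finset.sum_range_succ' _ N
          rw [hsplit]
          have hQe0 : Qe 0 * ye ^ 0 = 1 := by
            simp [hQe, hQ0]
          rw [hQe0]
          have : (∑ i ∈ Finset.range N, Qe (i + 1) * ye ^ (i + 1)) + 1 ≤ xe + 1 :=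
            add_le_add_left ih 1
          refine (pow_le_pow_left' ?_ _)
          calc (∑ i ∈ Finset.range N, Qe (i + 1) * ye ^ (i + 1)) + 1 ≤ xe + 1 := this
            _ = 1 + xe := add_comm _ _
        calc ∑ j ∈ Finset.range (N + 1), (ENNReal.ofReal (w (k + 3)) *
              ∑ t ∈ Finset.Nat.antidiagonalTuple (2 * (k + 3) - 2) j, ∏ i, Qe (t i)) * ye ^ (j + 1)
            = ENNReal.ofReal (w (k + 3)) * ((∑ j ∈ Finset.range (N + 1),
              (∑ t ∈ Finset.Nat.antidiagonalTuple (2 * (k + 3) - 2) j, ∏ i, Qe (t i)) * ye ^ j) * ye) := by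
              rw [Finset.sum_mul, Finset.mul_sum]
              refine Finset.sum_congr rfl fun j _ => ?_
              rw [pow_succ]; ring
          _ ≤ ENNReal.ofReal (w (k + 3)) * ((1 + xe) ^ (2 * (k + 3) - 2) * ye) :=
              mul_le_mul_right (mul_le_mul_left hcomb ye) _
          _ = ENNReal.ofReal (w (k + 3)) * (1 + xe) ^ (2 * (k + 3) - 2) * ye := by ring
      calc ∑ j ∈ Finset.range (N + 1), Qe (j + 1) * ye ^ (j + 1)
          ≤ ∑' k : ℕ, ∑ j ∈ Finset.range (N + 1), (ENNReal.ofReal (w (k + 3)) *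
              ∑ t ∈ Finset.Nat.antidiagonalTuple (2 * (k + 3) - 2) j, ∏ i, Qe (t i)) * ye ^ (j + 1) :=
            step2 ▸ step1
        _ ≤ ∑' k : ℕ, ENNReal.ofReal (w (k + 3)) * (1 + xe) ^ (2 * (k + 3) - 2) * ye :=
            ENNReal.tsum_le_tsum step3
        _ = (∑' k : ℕ, ENNReal.ofReal (w (k + 3)) * (1 + xe) ^ (2 * (k + 3) - 2)) * ye :=
            ENNReal.tsum_mul_right
        _ = ye * ENNReal.ofReal S := by rw [hSE, mul_comm]
        _ = xe := hyeS
  -- conclude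
  intro n
  match n with
  | 0 => simp [hQ0]
  | (n + 1) =>
    have hone : Qe (n + 1) * ye ^ (n + 1) ≤ xe := by
      refine le_trans ?_ (hT (n + 1))
      exact Finset.single_le_sum (f := fun j => Qe (j + 1) * ye ^ (j + 1))
        (fun _ _ => zero_le) (Finset.self_mem_range_succ n)
    have h2 : ENNReal.ofReal (Q (n + 1) * y ^ (n + 1)) ≤ ENNReal.ofReal x₀ := by
      rw [ENNReal.ofReal_mul (hQnonneg _), ENNReal.ofReal_pow hypos.le]
      exact hone
    have h3 : Q (n + 1) * y ^ (n + 1) ≤ x₀ := (ENNReal.ofReal_le_ofReal_iff hx₀.le).1 h2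
    have hyρ : y * ρ = 1 := by
      rw [hy, hρ]
      field_simp
    have hρn : (0 : ℝ) < ρ ^ (n + 1) := pow_pos hρpos _
    have hyn : y ^ (n + 1) * ρ ^ (n + 1) = 1 := by
      rw [← mul_pow, hyρ, one_pow]
    have h4 : Q (n + 1) ≤ x₀ * ρ ^ (n + 1) := by
      have := mul_le_mul_of_nonneg_right h3 hρn.le
      calc Q (n + 1) = Q (n + 1) * (y ^ (n + 1) * ρ ^ (n + 1)) := by rw [hyn, mul_one]
        _ = Q (n + 1) * y ^ (n + 1) * ρ ^ (n + 1) := by ring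
        _ ≤ x₀ * ρ ^ (n + 1) := this
    calc Q (n + 1) ≤ x₀ * ρ ^ (n + 1) := h4
      _ ≤ 1 * ρ ^ (n + 1) := mul_le_mul_of_nonneg_right hx1 hρn.le
      _ = ρ ^ (n + 1) := one_mul _
end

section
/- Let γ > 0, Δ ≥ 2, and for integers k ≥ 3 and n ≥ 1 with k_1,…,k_n ≥ 3, it holds that (1/(⌈γ(Δ-1)⌉+1))^n · ∏_{s=1}^n (1 - (1 - 1/(⌈γ(Δ-1)⌉+1))^{Δ-1})^{2k_s - 3} ≤ (1/(Δ-1))^n · ∏_{s=1}^n (1/γ)(1 - e^{-1/γ})^{2k_s - 3}. -/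
/-- The bound of Lemma 5 is dominated by the simplified bound of Remark 6:
`(1/(⌈γ(Δ-1)⌉+1))^n ∏ (1-(1-1/(⌈γ(Δ-1)⌉+1))^{Δ-1})^{2k_s-3}
  ≤ (1/(Δ-1))^n ∏ (1/γ)(1-e^{-1/γ})^{2k_s-3}`. -/
theorem stmt_12 (γ : ℝ) (hγ : 0 < γ) (Δ : ℕ) (hΔ : 2 ≤ Δ)
    (n : ℕ) (hn : 1 ≤ n) (k : Fin n → ℕ) (hk : ∀ s, 3 ≤ k s) :
    (1 / ((⌈γ * ((Δ : ℝ) - 1)⌉ : ℝ) + 1)) ^ n *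
        ∏ s, (1 - (1 - 1 / ((⌈γ * ((Δ : ℝ) - 1)⌉ : ℝ) + 1)) ^ (Δ - 1)) ^ (2 * k s - 3)
      ≤ (1 / ((Δ : ℝ) - 1)) ^ n *
        ∏ s, (1 / γ) * (1 - Real.exp (-1 / γ)) ^ (2 * k s - 3) := by
  have hD1 : (1 : ℝ) ≤ (Δ : ℝ) - 1 := by
    have : (2 : ℝ) ≤ (Δ : ℝ) := by exact_mod_cast hΔ
    linarith
  set D : ℝ := (Δ : ℝ) - 1 with hD
  have hDpos : 0 < D := lt_of_lt_of_le one_pos hD1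
  have hx : 0 < γ * D := mul_pos hγ hDpos
  set c : ℝ := (⌈γ * D⌉ : ℝ) + 1 with hc
  have hcge : γ * D + 1 ≤ c := by
    have := Int.le_ceil (γ * D)
    simp only [hc]; linarith
  have hcpos : 0 < c := by linarith
  have hc1 : 1 ≤ c := by linarith
  -- key: exp(-1/(γD)) < 1 - 1/(γD+1)
  have hexp : Real.exp (-1 / (γ * D)) < 1 - 1 / (γ * D + 1) := by
    have h1 : (γ * D + 1) / (γ * D) < Real.exp (1 / (γ * D)) := by
      have h := Real.add_one_lt_exp (show 1 / (γ * D) ≠ 0 by positivity)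
      have : (γ * D + 1) / (γ * D) = 1 / (γ * D) + 1 := by field_simp; ring
      linarith
    have h2 : (Real.exp (1 / (γ * D)))⁻¹ < ((γ * D + 1) / (γ * D))⁻¹ :=
      inv_strictAnti₀ (by positivity) h1
    have h3 : Real.exp (-1 / (γ * D)) = (Real.exp (1 / (γ * D)))⁻¹ := by
      rw [← Real.exp_neg]; ring_nf
    have h4 : ((γ * D + 1) / (γ * D))⁻¹ = 1 - 1 / (γ * D + 1) := by
      field_simp
      ring
    rw [h3, h4.symm] at *
    linarith [h2]
  -- base bound
  have hbaseA : 1 - 1 / (γ * D + 1) ≤ 1 - 1 / c := by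
    have : 1 / c ≤ 1 / (γ * D + 1) := by
      apply one_div_le_one_div_of_le (by positivity) hcge
    linarith
  have hexpc : Real.exp (-1 / (γ * D)) ≤ 1 - 1 / c := le_trans hexp.le hbaseA
  have hbase : Real.exp (-1 / γ) ≤ (1 - 1 / c) ^ (Δ - 1) := by
    have hcast : ((Δ - 1 : ℕ) : ℝ) = D := by
      rw [hD]; push_cast [Nat.cast_sub (by omega : 1 ≤ Δ)]; ring
    have hid : Real.exp (-1 / γ) = (Real.exp (-1 / (γ * D))) ^ (Δ - 1) := by
      rw [← Real.exp_nat_mul, hcast]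
      congr 1
      field_simp
    rw [hid]
    exact pow_le_pow_left₀ (Real.exp_pos _).le hexpc _
  have hAnonneg : 0 ≤ 1 - (1 - 1 / c) ^ (Δ - 1) := by
    have h0 : 0 ≤ 1 - 1 / c := by
      have : 1 / c ≤ 1 := by
        rw [div_le_one hcpos]; exact hc1
      linarith
    have h1 : (1 - 1 / c) ^ (Δ - 1) ≤ 1 :=
      pow_le_one₀ h0 (by
        have : 0 < 1 / c := by positivity
        linarith)
    linarith
  have hAB : 1 - (1 - 1 / c) ^ (Δ - 1) ≤ 1 - Real.exp (-1 / γ) := by linarith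
  -- rewrite RHS
  have hprod : ∏ s, (1 / γ) * (1 - Real.exp (-1 / γ)) ^ (2 * k s - 3)
      = (1 / γ) ^ n * ∏ s, (1 - Real.exp (-1 / γ)) ^ (2 * k s - 3) := by
    rw [Finset.prod_mul_distrib, Finset.prod_const, Finset.card_univ, Fintype.card_fin]
  rw [hprod, ← mul_assoc, ← mul_pow]
  apply mul_le_mul
  · apply pow_le_pow_left₀ (by positivity)
    have hcx : γ * D < c := by linarith
    rw [div_mul_div_comm, one_mul]
    rw [div_le_div_iff₀ hcpos (by positivity)]
    nlinarith [hcx]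
  · apply Finset.prod_le_prod
    · intro s _; positivity
    · intro s _
      exact pow_le_pow_left₀ hAnonneg hAB _
  · apply Finset.prod_nonneg; intro s _; positivity
  · positivity
end
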